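/- Let q > 1 be real, m ≥ 0 and k ≥ 1 integers, and r_1,…,r_k integers with 0 ≤ r_i ≤ m. Define the polynomial 𝒫(x) := x^{−1} ∏_{i=1}^{k} ( x · (x;q^{−1})_{m−r_i}/(q;q)_{m−r_i} ) (a polynomial in x since k ≥ 1). Then Δ_q^{m}(𝒫)(1) = q^{−binom(m,2) + m(k−1)} (q−1)^{−m} · M^{m}_{r_1,…,r_k}(q). -/

import Mathlib

/-- The `q`-difference operator `Δ_q(f)(x) = (f(qx) − f(x)) / ((q−1) x)`. -/
noncomputable def qDiffOp (q : ℝ) (f : ℝ → ℝ) : ℝ → ℝ :=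
  fun x => (f (q * x) - f x) / ((q - 1) * x)

/-- The `q`-Pochhammer symbol `(a; q)_m = ∏_{i=0}^{m-1} (1 - a q^i)` over `ℝ`. -/
noncomputable def qPoch (a q : ℝ) (m : ℕ) : ℝ := ∏ i ∈ Finset.range m, (1 - a * q ^ i)

/-- The `q`-integer `[m]_q = 1 + q + ⋯ + q^{m-1}`. -/
noncomputable def qInt (q : ℝ) (m : ℕ) : ℝ := ∑ i ∈ Finset.range m, q ^ i

/-- The `q`-factorial `[m]!_q = [1]_q [2]_q ⋯ [m]_q`. -/
noncomputable def qFact (q : ℝ) (m : ℕ) : ℝ := ∏ i ∈ Finset.range m, qInt q (i + 1)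

/-- The `q`-binomial coefficient `[n choose k]_q = [n]!_q / ([k]!_q [n-k]!_q)`. -/
noncomputable def qBinom (q : ℝ) (n k : ℕ) : ℝ := qFact q n / (qFact q k * qFact q (n - k))

/-- `M^m_{r_1,…,r_j}(q) = Σ_{d=0}^{min_i r_i} (−1)^d q^{binom(d+1,2) − jd} [m choose d]_q
∏_i [m−d choose r_i−d]_q` for a nonempty list `r` of length `j`, and `M^m_∅(q) = 0`. -/
noncomputable def MqL (q : ℝ) (m : ℕ) : List ℕ → ℝ
  | [] => 0
  | (a :: as) =>
    ∑ d ∈ Finset.range ((as.foldr min a) + 1),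
      (-1 : ℝ) ^ d * q ^ ((d * (d + 1) / 2 : ℤ) - ((a :: as).length : ℤ) * d) *
        qBinom q m d * ((a :: as).map (fun ri => qBinom q (m - d) (ri - d))).prod

section basic
variable {q : ℝ} (hq : 1 < q)
include hq

lemma q_pos : (0:ℝ) < q := lt_trans one_pos hq
lemma q_ne : q ≠ 0 := ne_of_gt (q_pos hq)
lemma qm1_ne : q - 1 ≠ 0 := ne_of_gt (by linarith)

lemma qInt_pos (n : ℕ) : 0 < qInt q (n + 1) := by
  apply Finset.sum_pos (fun i _ => pow_pos (q_pos hq) i)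
  exact Finset.nonempty_range_iff.mpr (Nat.succ_ne_zero n)

lemma qInt_ne (n : ℕ) : qInt q (n + 1) ≠ 0 := ne_of_gt (qInt_pos hq n)

lemma qFact_pos (n : ℕ) : 0 < qFact q n :=
  Finset.prod_pos (fun i _ => qInt_pos hq i)

lemma qFact_ne (n : ℕ) : qFact q n ≠ 0 := ne_of_gt (qFact_pos hq n)

end basic

lemma qFact_zero (q : ℝ) : qFact q 0 = 1 := by simp [qFact]

lemma qFact_succ (q : ℝ) (n : ℕ) : qFact q (n+1) = qFact q n * qInt q (n+1) :=
  Finset.prod_range_succ _ _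

lemma qBinom_zero (q : ℝ) (hq : 1 < q) (n : ℕ) : qBinom q n 0 = 1 := by
  simp [qBinom, qFact_zero, div_self (qFact_ne hq n)]

lemma qBinom_self (q : ℝ) (hq : 1 < q) (n : ℕ) : qBinom q n n = 1 := by
  simp [qBinom, qFact_zero, div_self (qFact_ne hq n)]

lemma qBinom_symm (q : ℝ) {n d : ℕ} (h : d ≤ n) : qBinom q n (n - d) = qBinom q n d := by
  rw [qBinom, qBinom, show n - (n - d) = d by omega, mul_comm]

lemma qInt_add (q : ℝ) (a b : ℕ) : qInt q (a + b) = qInt q a + q ^ a * qInt q b := by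
  rw [qInt, Finset.sum_range_add, qInt, qInt, Finset.mul_sum]
  congr 1; exact Finset.sum_congr rfl fun i _ => by rw [pow_add]

lemma qBinom_pascal (q : ℝ) (hq : 1 < q) {n j : ℕ} (h : j < n) :
    qBinom q (n+1) (j+1) = qBinom q n j + q^(j+1) * qBinom q n (j+1) := by
  have h1 : n + 1 - (j + 1) = n - j := by omega
  have h2 : n - (j + 1) = (n - j) - 1 := by omega
  have h3 : n - j = (n - j - 1) + 1 := by omega
  rw [qBinom, qBinom, qBinom, h1, h2, qFact_succ, qFact_succ]
  rw [show qFact q (n - j) = qFact q (n - j - 1) * qInt q (n - j) by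
    rw [h3, qFact_succ, ← h3]]
  have h4 : qInt q (n+1) = qInt q (j+1) + q^(j+1) * qInt q (n-j) := by
    rw [← qInt_add]; congr 1; omega
  rw [h4]
  have := qFact_ne hq n; have := qFact_ne hq j; have := qFact_ne hq (n - j - 1)
  have := qInt_ne hq j
  have h5 : qInt q (n - j) ≠ 0 := by rw [h3]; exact qInt_ne hq (n - j - 1)
  field_simp

noncomputable def Ccoef (q : ℝ) : ℕ → ℤ → ℝ
  | 0, j => if j = 0 then 1 else 0
  | (n+1), j => q ^ (-(n:ℤ)) * Ccoef q n (j-1) - Ccoef q n j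

lemma Ccoef_neg (q : ℝ) : ∀ (n : ℕ) (j : ℤ), j < 0 → Ccoef q n j = 0 := by
  intro n
  induction n with
  | zero => intro j hj; simp [Ccoef]; omega
  | succ n ih =>
    intro j hj
    rw [Ccoef, ih (j-1) (by omega), ih j hj]; ring

lemma Ccoef_gt (q : ℝ) : ∀ (n : ℕ) (j : ℤ), (n:ℤ) < j → Ccoef q n j = 0 := by
  intro n
  induction n with
  | zero => intro j hj; simp [Ccoef]; omega
  | succ n ih =>
    intro j hj
    rw [Ccoef, ih (j-1) (by push_cast; omega), ih j (by push_cast at hj ⊢; omega)]; ring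

lemma iter_expand {q : ℝ} (hq : 1 < q) (f : ℝ → ℝ) :
    ∀ (m : ℕ) (x : ℝ), x ≠ 0 →
      (qDiffOp q)^[m] f x
        = ((q-1)*x) ^ (-(m:ℤ)) * ∑ j ∈ Finset.range (m+1), Ccoef q m j * f (q^j * x) := by
  intro m
  induction m with
  | zero =>
    intro x hx
    simp [Ccoef]
  | succ m ih =>
    intro x hx
    have hqne := q_ne hq
    have hD : (q-1)*x ≠ 0 := mul_ne_zero (qm1_ne hq) hx
    rw [Function.iterate_succ_apply']
    simp only [qDiffOp]
    rw [ih (q*x) (mul_ne_zero hqne hx), ih x hx]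
    have harg : ∀ j : ℕ, q^j * (q*x) = q^(j+1) * x := fun j => by ring
    simp only [harg]
    -- key sum identity
    have key : ∑ j ∈ Finset.range (m+2), Ccoef q (m+1) j * f (q^j * x)
        = q^(-(m:ℤ)) * (∑ j ∈ Finset.range (m+1), Ccoef q m j * f (q^(j+1) * x))
          - ∑ j ∈ Finset.range (m+1), Ccoef q m j * f (q^j * x) := by
      have expand : ∀ j : ℕ, Ccoef q (m+1) (j:ℤ) * f (q^j * x)
          = q^(-(m:ℤ)) * (Ccoef q m ((j:ℤ)-1) * f (q^j * x)) - Ccoef q m j * f (q^j * x) := by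
        intro j; rw [Ccoef]; ring
      rw [Finset.sum_congr rfl (fun j _ => expand j), Finset.sum_sub_distrib]
      congr 1
      · rw [Finset.sum_range_succ' (fun j => q^(-(m:ℤ)) * (Ccoef q m ((j:ℤ)-1) * f (q^j * x))) (m+1)]
        rw [Ccoef_neg q m (((0:ℕ):ℤ) - 1) (by norm_num), Finset.mul_sum]
        simp only [zero_mul, mul_zero, add_zero]
        refine Finset.sum_congr rfl fun j _ => ?_
        rw [show ((j+1:ℕ):ℤ) - 1 = (j:ℤ) by push_cast; ring]
      · rw [Finset.sum_range_succ, Ccoef_gt q m ((m+1:ℕ):ℤ) (by push_cast; omega)]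
        simp
    push_cast at key ⊢
    rw [key]
    have hsplit : ((q-1)*(q*x))^(-(m:ℤ)) = q^(-(m:ℤ)) * ((q-1)*x)^(-(m:ℤ)) := by
      rw [show (q-1)*(q*x) = q*((q-1)*x) by ring, mul_zpow]
    rw [hsplit]
    rw [show (-((m:ℤ)+1)) = -(m:ℤ) + (-1) by ring, zpow_add₀ hD, zpow_neg_one]
    field_simp

lemma choose2_succ (n : ℕ) : ((n+1).choose 2 : ℤ) = (n.choose 2 : ℤ) + n := by
  have h2 := Nat.choose_succ_succ n 1
  rw [Nat.choose_one_right] at h2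
  simp only [show Nat.succ 1 = 2 from rfl, Nat.succ_eq_add_one] at h2
  push_cast [h2]; ring

lemma tri_eq_choose (d : ℕ) : ((d:ℤ) * (d+1) / 2) = (d.choose 2 : ℤ) + d := by
  have h2 := Nat.choose_succ_succ d 1
  rw [Nat.choose_one_right] at h2
  simp only [show Nat.succ 1 = 2 from rfl, Nat.succ_eq_add_one] at h2
  have h3 := Nat.choose_two_right (d+1)
  simp only [Nat.add_sub_cancel] at h3
  have h1 : d * (d+1) / 2 = d.choose 2 + d := by rw [Nat.mul_comm]; omega
  calc ((d:ℤ) * (d+1) / 2) = ((d * (d+1) : ℕ) : ℤ) / ((2:ℕ):ℤ) := by push_cast; ring_nf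
    _ = ((d * (d+1) / 2 : ℕ) : ℤ) := (Int.natCast_ediv _ _).symm
    _ = _ := by rw [h1]; push_cast; ring

lemma Ccoef_closed {q : ℝ} (hq : 1 < q) :
    ∀ n j : ℕ, j ≤ n →
      Ccoef q n (j:ℤ)
        = (-1)^(n-j) * q ^ (((n-j).choose 2 : ℤ) - (n.choose 2 : ℤ)) * qBinom q n j := by
  have hqne := q_ne hq
  intro n
  induction n with
  | zero =>
    intro j hj
    interval_cases j
    simp [Ccoef, qBinom, qFact_zero]
  | succ n ih =>
    intro j hj
    match j with
    | 0 =>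
      have ih0 := ih 0 (Nat.zero_le n)
      push_cast at ih0
      rw [show ((0:ℕ):ℤ) = (0:ℤ) from rfl, Ccoef,
        Ccoef_neg q n ((0:ℤ)-1) (by omega), ih0]
      simp only [Nat.sub_zero, mul_zero, zero_mul, sub_zero]
      rw [qBinom_zero q hq, qBinom_zero q hq]
      rw [show ((n.choose 2 :ℤ) - (n.choose 2:ℤ)) = 0 by ring,
        show (((n+1).choose 2 :ℤ) - ((n+1).choose 2:ℤ)) = 0 by ring]
      simp [pow_succ]
    | (i+1) =>
      have hcast : ((i+1:ℕ):ℤ) - 1 = (i:ℤ) := by push_cast; ring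
      rw [show ((i+1:ℕ):ℤ) = ((i:ℕ):ℤ)+1 by push_cast; ring] at *
      rw [Ccoef]
      rw [show ((i:ℕ):ℤ)+1-1 = ((i:ℕ):ℤ) by ring]
      rcases Nat.lt_or_ge i n with hin | hin
      · -- i < n
        obtain ⟨t, ht⟩ : ∃ t, n - i = t + 1 := ⟨n - i - 1, by omega⟩
        have ihi1 := ih (i+1) hin
        push_cast at ihi1
        rw [ih i (le_of_lt hin), ihi1, qBinom_pascal q hq hin]
        have hs1 : n + 1 - (i+1) = t + 1 := by omega
        have hs2 : n - (i+1) = t := by omega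
        rw [hs1, hs2, ht]
        have hsgn : (-1:ℝ)^t = -(-1:ℝ)^(t+1) := by rw [pow_succ]; ring
        have hz1 : q^(-(n:ℤ)) * q^(((t+1).choose 2 : ℤ) - (n.choose 2:ℤ))
            = q^(((t+1).choose 2 : ℤ) - ((n+1).choose 2:ℤ)) := by
          rw [← zpow_add₀ hqne]; congr 1
          have := choose2_succ n; omega
        have hz2 : q^(((t+1).choose 2 : ℤ) - ((n+1).choose 2:ℤ)) * q^((i+1:ℕ))
            = q^((t.choose 2 : ℤ) - (n.choose 2:ℤ)) := by
          rw [← zpow_natCast q (i+1), ← zpow_add₀ hqne]; congr 1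
          have h1 := choose2_succ n
          have h2 := choose2_succ t
          have h3 : (i:ℤ) + 1 = (n:ℤ) - t := by omega
          push_cast
          omega
        rw [hsgn]
        linear_combination ((-1:ℝ)^(t+1) * qBinom q n i) * hz1
          - ((-1:ℝ)^(t+1) * qBinom q n (i+1)) * hz2
      · -- i = n
        have hin' : i = n := by omega
        subst hin'
        rw [Ccoef_gt q i (((i:ℕ):ℤ)+1) (by omega), ih i le_rfl,
            qBinom_self q hq, qBinom_self q hq]
        simp only [Nat.sub_self, pow_zero, one_mul, mul_one, mul_zero, sub_zero, zero_sub,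
          show Nat.choose 0 2 = 0 from rfl, Nat.cast_zero]
        rw [← zpow_add₀ hqne]
        congr 1
        have := choose2_succ i; omega

lemma qPoch_q_eq {q : ℝ} (s : ℕ) : qPoch q q s = (1-q)^s * qFact q s := by
  rw [qPoch, qFact,
    show ((1-q):ℝ)^s = ∏ _i ∈ Finset.range s, (1-q) by
      rw [Finset.prod_const, Finset.card_range],
    ← Finset.prod_mul_distrib]
  apply Finset.prod_congr rfl
  intro i _
  have h := geom_sum_mul q (i+1)
  rw [qInt]
  rw [show (1:ℝ) - q * q ^ i = -(q^(i+1) - 1) by rw [pow_succ]; ring]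
  rw [← h]; ring

lemma qPoch_q_ne {q : ℝ} (hq : 1 < q) (s : ℕ) : qPoch q q s ≠ 0 := by
  rw [qPoch_q_eq]
  exact mul_ne_zero (pow_ne_zero _ (by linarith)) (qFact_ne hq s)

lemma qPoch_pow_zero {q : ℝ} (hq : 1 < q) {j s : ℕ} (h : j < s) :
    qPoch (q^j) q⁻¹ s = 0 := by
  rw [qPoch]
  apply Finset.prod_eq_zero (Finset.mem_range.mpr h)
  rw [inv_pow, mul_inv_cancel₀ (pow_ne_zero _ (q_ne hq))]
  ring

lemma qPoch_pow_eq {q : ℝ} (hq : 1 < q) {j s : ℕ} (h : s ≤ j) :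
    qPoch (q^j) q⁻¹ s * qPoch q q (j - s) = qPoch q q j := by
  have hqne := q_ne hq
  obtain ⟨a, rfl⟩ : ∃ a, j = a + s := ⟨j - s, by omega⟩
  have h1 : qPoch (q^(a+s)) q⁻¹ s = ∏ i ∈ Finset.range s, (1 - q * q^(a + i)) := by
    rw [qPoch, ← Finset.prod_range_reflect (fun i => 1 - q * q^(a + i)) s]
    apply Finset.prod_congr rfl
    intro i hi
    rw [Finset.mem_range] at hi
    congr 1
    rw [inv_pow]
    rw [show q * q^(a + (s - 1 - i)) = q^(a+s) * (q^i)⁻¹ * (q^i * (q^i)⁻¹) by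
      field_simp; rw [← pow_succ', ← pow_add]; congr 1; omega]
    rw [mul_inv_cancel₀ (pow_ne_zero _ hqne), mul_one]
  rw [h1, show a + s - s = a by omega, qPoch, qPoch, mul_comm, ← Finset.prod_range_add]

lemma G_eq {q : ℝ} (hq : 1 < q) {j s : ℕ} (h : s ≤ j) :
    qPoch (q^j) q⁻¹ s / qPoch q q s = qBinom q j s := by
  have h1 := qPoch_pow_eq hq h
  have h2 : qPoch (q^j) q⁻¹ s = qPoch q q j / qPoch q q (j - s) := by
    rw [eq_div_iff (qPoch_q_ne hq (j-s))]; exact h1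
  rw [h2, qBinom, qPoch_q_eq, qPoch_q_eq, qPoch_q_eq]
  obtain ⟨a, rfl⟩ : ∃ a, j = a + s := ⟨j - s, by omega⟩
  rw [show a + s - s = a by omega, pow_add]
  have h1q : ((1:ℝ) - q) ≠ 0 := by linarith
  have := qFact_ne hq a; have := qFact_ne hq s; have := qFact_ne hq (a+s)
  field_simp

lemma foldr_min_le_init (a : ℕ) (l : List ℕ) : l.foldr min a ≤ a := by
  induction l with
  | nil => simp
  | cons x t ih => simpa using Or.inr ih

lemma foldr_min_le_mem (a : ℕ) (l : List ℕ) : ∀ b ∈ l, l.foldr min a ≤ b := by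
  induction l with
  | nil => simp
  | cons x t ih =>
    intro b hb
    rcases List.mem_cons.mp hb with rfl | hb
    · simp
    · simp only [List.foldr_cons]
      exact le_trans (min_le_right _ _) (ih b hb)

lemma foldr_min_cases (a : ℕ) (l : List ℕ) : l.foldr min a = a ∨ l.foldr min a ∈ l := by
  induction l with
  | nil => simp
  | cons x t ih =>
    simp only [List.foldr_cons]
    rcases le_total x (t.foldr min a) with h | h
    · right; rw [min_eq_left h]; exact List.mem_cons_self
    · rw [min_eq_right h]
      rcases ih with h1 | h1
      · left; exact h1
      · right; exact List.mem_cons_of_mem _ h1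

noncomputable def Grat (q : ℝ) (m : ℕ) {k : ℕ} (r : Fin k → ℕ) (j : ℕ) (i : Fin k) : ℝ :=
  qPoch (q^j) q⁻¹ (m - r i) / qPoch q q (m - r i)


/-- The `m`-th iterated `q`-difference at `x = 1` of the polynomial
`𝒫(x) = x⁻¹ ∏_{i=1}^k (x (x; q⁻¹)_{m−r_i} / (q; q)_{m−r_i})` equals
`q^{−binom(m,2) + m(k−1)} (q−1)^{−m} M^m_{r_1,…,r_k}(q)`. -/
theorem iterated_q_difference_of_P
    (q : ℝ) (hq : 1 < q) (m k : ℕ) (hk : 1 ≤ k) (r : Fin k → ℕ) (hr : ∀ i, r i ≤ m) :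
    (qDiffOp q)^[m]
        (fun x => (∏ i, (x * qPoch x q⁻¹ (m - r i) / qPoch q q (m - r i))) / x) 1
    = q ^ (((m * (k - 1) : ℕ) : ℤ) - ((m * (m - 1) / 2 : ℕ) : ℤ)) *
        (q - 1) ^ (-(m : ℤ)) * MqL q m (List.ofFn r) := by
  have hqne := q_ne hq
  have hq1 : q - 1 ≠ 0 := qm1_ne hq
  obtain ⟨k', rfl⟩ : ∃ k', k = k' + 1 := ⟨k - 1, by omega⟩
  set f : ℝ → ℝ :=
    fun x => (∏ i, (x * qPoch x q⁻¹ (m - r i) / qPoch q q (m - r i))) / x with hf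
  -- value of f at powers of q
  have hfval : ∀ j : ℕ, f (q^j) = q^(j*k') * ∏ i, Grat q m r j i := by
    intro j
    rw [hf]
    simp only
    rw [Finset.prod_congr rfl (fun i (_ : i ∈ Finset.univ) =>
          mul_div_assoc (q^j) (qPoch (q^j) q⁻¹ (m - r i)) (qPoch q q (m - r i))),
        Finset.prod_mul_distrib, Finset.prod_const, Finset.card_univ, Fintype.card_fin,
        ← pow_mul]
    rw [div_eq_iff (pow_ne_zero j hqne), show j*(k'+1) = j*k' + j by ring, pow_add]
    have hprod : (∏ x : Fin (k'+1), qPoch (q^j) q⁻¹ (m - r x) / qPoch q q (m - r x))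
        = ∏ i, Grat q m r j i := Finset.prod_congr rfl fun i _ => rfl
    rw [hprod]
    ring
  -- minimum of the r i
  set μ : ℕ := (List.ofFn (fun i : Fin k' => r i.succ)).foldr min (r 0) with hμdef
  have hμ1 : ∀ i, μ ≤ r i := by
    intro i
    induction i using Fin.cases with
    | zero => exact foldr_min_le_init _ _
    | succ i =>
      exact foldr_min_le_mem _ _ _ (List.mem_ofFn.mpr ⟨i, rfl⟩)
  have hμ2 : ∃ i, r i ≤ μ := by
    rcases foldr_min_cases (r 0) (List.ofFn (fun i : Fin k' => r i.succ)) with h | h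
    · exact ⟨0, le_of_eq h.symm⟩
    · obtain ⟨i, hi⟩ := List.mem_ofFn.mp h
      exact ⟨i.succ, le_of_eq hi⟩
  have hμm : μ ≤ m := le_trans (hμ1 0) (hr 0)
  -- the key rewriting of MqL
  have hstar : MqL q m (List.ofFn r)
      = ∑ d ∈ Finset.range (m+1),
          ((-1:ℝ)^d * q^(((d:ℤ) * ((d:ℤ) + 1) / 2) - ((k'+1:ℕ):ℤ)*(d:ℤ)) * qBinom q m d
            * ∏ i, Grat q m r (m-d) i) := by
    rw [List.ofFn_succ (f := r), MqL, ← hμdef]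
    trans (∑ d ∈ Finset.range (μ+1),
        ((-1:ℝ)^d * q^(((d:ℤ) * ((d:ℤ) + 1) / 2) - ((k'+1:ℕ):ℤ)*(d:ℤ)) * qBinom q m d
          * ∏ i, Grat q m r (m-d) i))
    · apply Finset.sum_congr rfl
      intro d hd
      rw [Finset.mem_range] at hd
      have hdμ : d ≤ μ := by omega
      congr 1
      · -- the scalar part
        simp only [List.length_cons, List.length_ofFn]
      · -- the product part
        rw [← List.ofFn_succ (f := r), List.map_ofFn, List.prod_ofFn]
        apply Finset.prod_congr rfl
        intro i _
        have hdi : d ≤ r i := le_trans hdμ (hμ1 i)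
        have him : r i ≤ m := hr i
        rw [Function.comp_apply, Grat]
        rw [G_eq hq (by omega : m - r i ≤ m - d),
          show m - r i = (m - d) - (r i - d) by omega,
          qBinom_symm q (by omega : r i - d ≤ m - d)]
    · apply Finset.sum_subset (Finset.range_subset_range.mpr (by omega : μ + 1 ≤ m + 1))
      intro d hd hnd
      rw [Finset.mem_range] at hd
      rw [Finset.mem_range] at hnd
      obtain ⟨i0, hi0⟩ := hμ2
      have hii : r i0 < d := by omega
      have hz : Grat q m r (m-d) i0 = 0 := by
        rw [Grat, qPoch_pow_zero hq (by omega : m - d < m - r i0), zero_div]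
      rw [Finset.prod_eq_zero (Finset.mem_univ i0) hz, mul_zero]
  -- expand the iterated difference operator
  rw [iter_expand hq f m 1 one_ne_zero]
  simp only [mul_one]
  have step1 : ∑ j ∈ Finset.range (m+1), Ccoef q m (j:ℤ) * f (q^j)
      = ∑ j ∈ Finset.range (m+1),
          ((-1:ℝ)^(m-j) * q^(((m-j).choose 2 : ℤ) - (m.choose 2 : ℤ)) * qBinom q m j
            * (q^(j*k') * ∏ i, Grat q m r j i)) := by
    apply Finset.sum_congr rfl
    intro j hj
    rw [Finset.mem_range] at hj
    rw [Ccoef_closed hq m j (by omega), hfval j]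
  rw [step1, ← Finset.sum_range_reflect]
  have step2 : ∀ d ∈ Finset.range (m+1),
      ((-1:ℝ)^(m-(m+1-1-d)) * q^(((m-(m+1-1-d)).choose 2 : ℤ) - (m.choose 2 : ℤ))
          * qBinom q m (m+1-1-d) * (q^((m+1-1-d)*k') * ∏ i, Grat q m r (m+1-1-d) i))
      = q^(((m*k':ℕ):ℤ) - ((m.choose 2 : ℕ):ℤ)) *
          ((-1:ℝ)^d * q^(((d:ℤ) * ((d:ℤ) + 1) / 2) - ((k'+1:ℕ):ℤ)*(d:ℤ)) * qBinom q m d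
            * ∏ i, Grat q m r (m-d) i) := by
    intro d hd
    rw [Finset.mem_range] at hd
    have hdm : d ≤ m := by omega
    rw [show m + 1 - 1 - d = m - d by omega, show m - (m - d) = d by omega,
        qBinom_symm q hdm]
    have hz : q^(((d.choose 2 : ℕ):ℤ) - ((m.choose 2:ℕ):ℤ)) * q^((m-d)*k')
        = q^(((m*k':ℕ):ℤ) - ((m.choose 2 : ℕ):ℤ))
          * q^(((d:ℤ) * ((d:ℤ) + 1) / 2) - ((k'+1:ℕ):ℤ)*(d:ℤ)) := by
      rw [← zpow_natCast q ((m-d)*k'), ← zpow_add₀ hqne, ← zpow_add₀ hqne]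
      congr 1
      rw [tri_eq_choose d]
      push_cast [Nat.cast_sub hdm]
      ring
    linear_combination ((-1:ℝ)^d * qBinom q m d * ∏ i, Grat q m r (m-d) i) * hz
  rw [Finset.sum_congr rfl step2, ← Finset.mul_sum, ← hstar]
  rw [show ((m * (k'+1-1) : ℕ) : ℤ) = ((m*k' : ℕ) : ℤ) by norm_num,
      show ((m * (m-1) / 2 : ℕ) : ℤ) = ((m.choose 2 : ℕ) : ℤ) by rw [Nat.choose_two_right]]
  ring
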